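/- Let φ̂ : ℝ → (X → ℝ) be a family of bounded functions on a set X, and suppose there exist constants such that φ̂_τ = P(φ₀, φ₁ − τ) where φ₀, φ₁ are bounded functions and P(ψ, χ) ≤ min(ψ, χ) pointwise with P(ψ) = ψ when ψ ≤ χ. Then for the Legendre transform φ_t = sup_{τ∈ℝ} (tτ + φ̂_τ), there exists C₀ > 0 such that φ_t − φ₀ ≤ t·C₀ uniformly on X for all small t > 0, and there exists C₀' ∈ ℝ with C₀'·t ≤ φ_t − φ₀ uniformly; hence φ_t → φ₀ uniformly as t → 0. -/
import Mathlib


/-- Endpoint continuity of the Legendre transform of rooftop envelopes: given bounded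
functions `φ₀, φ₁` on `X` and a rooftop-envelope operator `P` with `P(ψ,χ) ≤ min(ψ,χ)`
and `P(ψ,χ) = ψ` whenever `ψ ≤ χ`, the Legendre transform
`φ_t = sup_{τ∈ℝ} (tτ + P(φ₀, φ₁ − τ))` satisfies: there is `C₀ > 0` with
`φ_t − φ₀ ≤ t·C₀` uniformly for all small `t > 0`, and there is `C₀' ∈ ℝ` with
`C₀'·t ≤ φ_t − φ₀` uniformly; hence `φ_t → φ₀` uniformly as `t → 0⁺`. -/
theorem stmt_15 {X : Type*}
    (P : (X → ℝ) → (X → ℝ) → (X → ℝ))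
    (hPle : ∀ ψ χ : X → ℝ, ∀ x, P ψ χ x ≤ min (ψ x) (χ x))
    (hPeq : ∀ ψ χ : X → ℝ, (∀ x, ψ x ≤ χ x) → P ψ χ = ψ)
    (φ₀ φ₁ : X → ℝ) (M : ℝ)
    (hb0 : ∀ x, |φ₀ x| ≤ M) (hb1 : ∀ x, |φ₁ x| ≤ M)
    (Φ : ℝ → X → ℝ)
    (hΦ : ∀ t x, Φ t x = ⨆ τ : ℝ, (t * τ + P φ₀ (fun x' => φ₁ x' - τ) x)) :
    (∃ C₀ > (0:ℝ), ∃ ε > (0:ℝ), ∀ t ∈ Set.Ioc (0:ℝ) ε, ∀ x, Φ t x - φ₀ x ≤ t * C₀) ∧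
    (∃ C₀' : ℝ, ∃ ε > (0:ℝ), ∀ t ∈ Set.Ioc (0:ℝ) ε, ∀ x, C₀' * t ≤ Φ t x - φ₀ x) ∧
    TendstoUniformly Φ φ₀ (nhdsWithin 0 (Set.Ioi 0)) := by
  have key : ∀ t : ℝ, 0 < t → t ≤ 1 → ∀ x,
      Φ t x - φ₀ x ≤ 2 * |M| * t ∧ -(2 * |M|) * t ≤ Φ t x - φ₀ x := by
    intro t ht ht1 x
    have hM : 0 ≤ M := le_trans (abs_nonneg _) (hb0 x)
    have hMabs : |M| = M := abs_of_nonneg hM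
    have hb0x := abs_le.1 (hb0 x)
    have hb1x := abs_le.1 (hb1 x)
    have hub : ∀ τ : ℝ, t * τ + P φ₀ (fun x' => φ₁ x' - τ) x ≤ φ₀ x + 2 * M * t := by
      intro τ
      rcases le_total τ (2 * M) with h | h
      · have h1 : P φ₀ (fun x' => φ₁ x' - τ) x ≤ φ₀ x :=
          le_trans (hPle _ _ x) (min_le_left _ _)
        nlinarith
      · have h2 : P φ₀ (fun x' => φ₁ x' - τ) x ≤ φ₁ x - τ :=
          le_trans (hPle _ _ x) (min_le_right _ _)
        nlinarith
    have hbdd : BddAbove (Set.range fun τ : ℝ => t * τ + P φ₀ (fun x' => φ₁ x' - τ) x) :=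
      ⟨φ₀ x + 2 * M * t, by rintro _ ⟨τ, rfl⟩; exact hub τ⟩
    constructor
    · rw [hΦ]
      have := ciSup_le hub
      rw [hMabs]
      linarith
    · have heq : P φ₀ (fun x' => φ₁ x' - (-(2 * M))) = φ₀ := by
        apply hPeq
        intro y
        have := abs_le.1 (hb0 y)
        have := abs_le.1 (hb1 y)
        show φ₀ y ≤ φ₁ y - -(2 * M)
        linarith
      have hle := le_ciSup hbdd (-(2 * M))
      rw [heq] at hle
      rw [hΦ]
      rw [hMabs]
      nlinarith
  refine ⟨⟨2 * |M| + 1, by positivity, 1, one_pos, fun t ht x => ?_⟩,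
          ⟨-(2 * |M|), 1, one_pos, fun t ht x => (key t ht.1 ht.2 x).2⟩, ?_⟩
  · have := (key t ht.1 ht.2 x).1
    have h0 : 0 ≤ |M| := abs_nonneg _
    nlinarith [ht.1]
  · rw [Metric.tendstoUniformly_iff]
    intro ε hε
    have hC : (0:ℝ) < 2 * |M| + 1 := by positivity
    set δ : ℝ := min 1 (ε / (2 * (2 * |M| + 1))) with hδdef
    have hδpos : 0 < δ := lt_min one_pos (by positivity)
    have hmem : Set.Ioo (0:ℝ) δ ∈ nhdsWithin 0 (Set.Ioi 0) :=
      Ioo_mem_nhdsGT_of_mem ⟨le_refl 0, hδpos⟩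
    filter_upwards [hmem] with t ht x
    have ht1 : t ≤ 1 := le_of_lt (lt_of_lt_of_le ht.2 (min_le_left _ _))
    have hk := key t ht.1 ht1 x
    have htδ : t < ε / (2 * (2 * |M| + 1)) := lt_of_lt_of_le ht.2 (min_le_right _ _)
    have h0 : 0 ≤ |M| := abs_nonneg _
    rw [Real.dist_eq]
    rw [abs_sub_lt_iff]
    have hmul : t * (2 * (2 * |M| + 1)) < ε := (lt_div_iff₀ (by positivity)).1 htδ
    constructor
    · nlinarith [ht.1, hk.1, hk.2]
    · nlinarith [ht.1, hk.1, hk.2]
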